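/- Let k be a field, P = k[x₁, …, x_c] the standard graded polynomial ring in c variables, and I a homogeneous ideal with [I]_0 = [I]_1 = 0 such that S = P/I is a compressed level algebra of socle degree e, type r, and codimension c. Assume c ≥ 2, e ≥ 2, r ≥ 2, and that it is not the case that e = 2 and r = c − 1. Then S has no homogeneous exact zero divisors: there is no pair (θ₁, θ₂) of homogeneous elements of S of positive degrees forming an exact pair of zero divisors. -/

import Mathlib

/-- `(a, b)` is an exact pair of zero divisors in `S`:
`(0 :_S a) = (b)` and `(0 :_S b) = (a)`. -/
def IsExactZeroDivisorPair {S : Type*} [CommRing S] (a b : S) : Prop :=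
  (∀ s : S, s * a = 0 ↔ ∃ c : S, s = c * b) ∧
  (∀ s : S, s * b = 0 ↔ ∃ c : S, s = c * a)

/-- The degree-`i` homogeneous component of the standard graded quotient
`MvPolynomial σ k ⧸ I`. -/
noncomputable def quotComponent {k : Type*} [Field k] {σ : Type*}
    (I : Ideal (MvPolynomial σ k)) (i : ℕ) : Submodule k (MvPolynomial σ k ⧸ I) :=
  (MvPolynomial.homogeneousSubmodule σ k i).map (Ideal.Quotient.mkₐ k I).toLinearMap


open MvPolynomial Module

namespace EZD

variable (c : ℕ)

/-- `F c j = C(c-1+j, c-1)`, the Hilbert function of the polynomial ring. -/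
def F (j : ℕ) : ℕ := (c - 1 + j).choose (c - 1)
/-- first difference of `F` -/
def G (j : ℕ) : ℕ := (c - 2 + j).choose (c - 2)

lemma F_zero : F c 0 = 1 := by simp [F]

lemma F_one (hc : 1 ≤ c) : F c 1 = c := by
  rw [F, show c - 1 + 1 = c by omega, Nat.choose_symm (show 1 ≤ c by omega),
    Nat.choose_one_right]

lemma G_one (hc : 2 ≤ c) : G c 1 = c - 1 := by
  have h2 : c - 2 = (c - 1) - 1 := by omega
  rw [G, show c - 2 + 1 = c - 1 by omega, h2,
    Nat.choose_symm (by omega : 1 ≤ c - 1), Nat.choose_one_right]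

lemma G_pos (j : ℕ) : 1 ≤ G c j := Nat.choose_pos (by omega)

lemma G_mono : Monotone (G c) := fun a b h => Nat.choose_le_choose _ (by omega)

lemma F_succ (hc : 2 ≤ c) (j : ℕ) : F c (j + 1) = F c j + G c (j + 1) := by
  obtain ⟨a, rfl⟩ : ∃ a, c = a + 2 := ⟨c - 2, by omega⟩
  unfold F G
  simp only [show a + 2 - 1 = a + 1 by omega, show a + 2 - 2 = a by omega,
    show a + 1 + (j + 1) = (a + 1 + j) + 1 by omega, show a + (j + 1) = a + 1 + j by omega]
  rw [Nat.choose_succ_succ]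
  simp only [Nat.succ_eq_add_one]
  omega

lemma F_pos (j : ℕ) : 1 ≤ F c j := Nat.choose_pos (by omega)

lemma F_strictMono (hc : 2 ≤ c) : StrictMono (F c) := by
  apply strictMono_nat_of_lt_succ
  intro n
  rw [F_succ c hc n]
  have := G_pos c (n + 1)
  omega

lemma F_super (hc : 2 ≤ c) (d x : ℕ) : F c d + F c x ≤ F c (x + d) + 1 := by
  induction x with
  | zero => simp [F_zero]
  | succ n ih =>
    rw [F_succ c hc n, show n + 1 + d = (n + d) + 1 by omega, F_succ c hc (n + d)]
    have := G_mono c (show n + 1 ≤ n + d + 1 by omega)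
    omega


lemma tech4 (r W : ℕ) (hr : 2 ≤ r) (hW : 3 ≤ W) : r + 2 * W ≤ r * W + 2 := by
  obtain ⟨s, rfl⟩ : ∃ s, r = s + 2 := ⟨r - 2, by omega⟩
  obtain ⟨v, rfl⟩ : ∃ v, W = v + 3 := ⟨W - 3, by omega⟩
  have : (s + 2) * (v + 3) = s * v + 3 * s + 2 * v + 6 := by ring
  omega

theorem arith_contra (e r d₁ d₂ : ℕ) (hc : 2 ≤ c) (he : 2 ≤ e) (hr : 2 ≤ r)
    (hne : ¬(e = 2 ∧ r = c - 1)) (hd₁ : 1 ≤ d₁) (hd₁₂ : d₁ ≤ d₂)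
    (N A B : ℤ → ℕ)
    (hNval : ∀ z : ℤ, 0 ≤ z → z ≤ e → N z = min (F c z.toNat) (r * F c (e - z.toNat)))
    (hNneg : ∀ z : ℤ, z < 0 → N z = 0)
    (hNhigh : ∀ z : ℤ, (e : ℤ) < z → N z = 0)
    (hNer : N e = r)
    (L1 : ∀ z : ℤ, N z = A z + B (z - d₂))
    (L2 : ∀ z : ℤ, N z = B z + A (z - d₁))
    (hA0 : ∀ z : ℤ, (e : ℤ) - d₁ < z → A z = 0)
    (hB0 : ∀ z : ℤ, (e : ℤ) - d₂ < z → B z = 0)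
    (hAneg : ∀ z : ℤ, z < 0 → A z = 0)
    (hBneg : ∀ z : ℤ, z < 0 → B z = 0)
    (hInj : ∀ z : ℕ, z ≤ e → F c z ≤ r * F c (e - z) → B ((z : ℤ) - (d₁ + d₂ : ℕ)) = 0) :
    False := by
  have hd₂ : 1 ≤ d₂ := le_trans hd₁ hd₁₂
  set D : ℕ := d₁ + d₂ with hD
  have hFmono : Monotone (F c) := (F_strictMono c hc).monotone
  -- the threshold t
  set P : ℕ → Prop := fun i => F c i ≤ r * F c (e - i) with hPdef
  have hP_anti : ∀ i j : ℕ, i ≤ j → j ≤ e → P j → P i := by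
    intro i j hij hje hPj
    calc F c i ≤ F c j := hFmono hij
    _ ≤ r * F c (e - j) := hPj
    _ ≤ r * F c (e - i) := Nat.mul_le_mul_left r (hFmono (by omega))
  have hP0 : P 0 := by
    simp only [hPdef, F_zero, Nat.sub_zero]
    have := F_pos c e
    nlinarith
  set t : ℕ := Nat.findGreatest P e with ht
  have htP : P t := Nat.findGreatest_spec (Nat.zero_le e) hP0
  have ht_le : t ≤ e := Nat.findGreatest_le e
  have ht_half : e / 2 ≤ t := by
    apply Nat.le_findGreatest (by omega)
    show F c (e / 2) ≤ r * F c (e - e / 2)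
    calc F c (e / 2) ≤ F c (e - e / 2) := hFmono (by omega)
    _ ≤ r * F c (e - e / 2) := by nlinarith [F_pos c (e - e / 2)]
  -- region values
  have hNF : ∀ j : ℕ, j ≤ t → N (j : ℤ) = F c j := by
    intro j hj
    rw [hNval j (by positivity) (by exact_mod_cast (by omega : j ≤ e))]
    simp only [Int.toNat_natCast]
    exact min_eq_left (hP_anti j t hj ht_le htP)
  have hNg : ∀ j : ℕ, t < j → j ≤ e → N (j : ℤ) = r * F c (e - j) := by
    intro j hjt hje
    rw [hNval j (by positivity) (by exact_mod_cast hje)]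
    simp only [Int.toNat_natCast]
    have hnP : ¬ P j := Nat.findGreatest_is_greatest hjt hje
    simp only [hPdef, not_le] at hnP
    exact min_eq_right (le_of_lt hnP)
  have hN0 : N 0 = 1 := by
    have := hNF 0 (Nat.zero_le t)
    rwa [F_zero] at this
  -- Step: t < D
  have htD : t < D := by
    by_contra hcon
    push_neg at hcon
    have hB00 : B 0 = 0 := by
      have := hInj D (by omega) (hP_anti D t hcon ht_le htP)
      rwa [sub_self] at this
    have hL2 := L2 0
    rw [hB00, hAneg (0 - d₁) (by exact_mod_cast (by omega : (0 : ℤ) - d₁ < 0))] at hL2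
    omega
  -- dichotomy
  rcases Nat.lt_or_ge e D with hDe | hDe
  · -- Case I : e < D
    have hA00 : A 0 = 1 := by
      have hL1 := L1 0
      rw [hBneg (0 - d₂) (by exact_mod_cast (by omega : (0 : ℤ) - d₂ < 0)), hN0] at hL1
      omega
    have hBd₁ : B (d₁ : ℤ) = 0 := hB0 _ (by exact_mod_cast (by omega : (e : ℤ) - d₂ < d₁))
    have hL2 := L2 d₁
    rw [hBd₁, show (d₁ : ℤ) - d₁ = 0 by ring, hA00] at hL2
    -- N d₁ = 1, but N d₁ ≥ 2 or = 0
    rcases Nat.lt_or_ge e d₁ with h1 | h1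
    · rw [hNhigh d₁ (by exact_mod_cast h1)] at hL2
      omega
    · rcases Nat.lt_or_ge t d₁ with h2 | h2
      · rw [hNg d₁ h2 h1] at hL2
        nlinarith [F_pos c (e - d₁)]
      · rw [hNF d₁ h2] at hL2
        have : F c 1 ≤ F c d₁ := hFmono hd₁
        rw [F_one c (by omega)] at this
        omega
  · -- Case III : D ≤ e
    set m : ℕ := e - D with hm
    have hm_t : m ≤ t := by omega
    -- derive aE
    have hAe : A e = 0 := hA0 _ (by omega)
    have heq1 : B ((e : ℤ) - d₂) = r := by have := L1 e; rw [hAe, hNer] at this; omega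
    have heq2 := L2 ((e : ℤ) - d₂)
    rw [heq1, show (e : ℤ) - d₂ - d₁ = (m : ℤ) by push_cast; omega] at heq2
    have heq3 := L1 (m : ℤ)
    have heq4 := L2 ((m : ℤ) - d₂)
    rw [show ((m : ℤ) - d₂ - d₁) = (e : ℤ) - 2 * D by push_cast; omega,
      hAneg _ (by omega : (e : ℤ) - 2 * D < 0)] at heq4
    have aE : N ((e : ℤ) - d₂) + N ((m : ℤ) - d₂) = r + N (m : ℤ) := by omega
    -- derive bE
    have heq1' : A ((e : ℤ) - d₁) = r := by
      have h5 := L2 e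
      rw [hB0 (e : ℤ) (by omega), hNer] at h5
      omega
    have heq2' := L1 ((e : ℤ) - d₁)
    rw [show (e : ℤ) - d₁ - d₂ = (m : ℤ) by push_cast; omega] at heq2'
    have heq3' := L2 (m : ℤ)
    have heq4' := L1 ((m : ℤ) - d₁)
    rw [show ((m : ℤ) - d₁ - d₂) = (e : ℤ) - 2 * D by push_cast; omega,
      hBneg _ (by omega : (e : ℤ) - 2 * D < 0)] at heq4'
    have bE : N ((e : ℤ) - d₁) + N ((m : ℤ) - d₁) = r + N (m : ℤ) := by
      -- careful: need heq1' : A (e - d₁) with L1 at (e - d₁): N(e-d₁) = A(e-d₁) + B(m)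
      omega
    -- derive a2
    have hAE1 : A ((e : ℤ) - d₁ + 1) = 0 := hA0 _ (by omega)
    have hq1 := L1 ((e : ℤ) - d₁ + 1)
    rw [hAE1, show (e : ℤ) - d₁ + 1 - d₂ = (m : ℤ) + 1 by push_cast; omega] at hq1
    have hq2 := L2 ((m : ℤ) + 1)
    have hq3 := L1 ((m : ℤ) + 1 - d₁)
    rw [show (m : ℤ) + 1 - d₁ - d₂ = (m : ℤ) + 1 - D by push_cast; omega] at hq3
    have hq4 := L2 ((m : ℤ) + 1 - D)
    rw [hAneg ((m : ℤ) + 1 - D - d₁) (by omega)] at hq4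
    have a2 : N ((e : ℤ) - d₁ + 1) + N ((m : ℤ) + 1 - d₁) = N ((m : ℤ) + 1) + N ((m : ℤ) + 1 - D) := by
      omega
    -- Case split on position of e - d₁
    rcases le_or_gt (e - d₁) t with hcase | hcase
    · -- III.1 : e - d₁ ≤ t
      have hmd₁ : m < d₁ := by omega
      -- aE evaluation
      rw [show ((e : ℤ) - d₂) = ((e - d₂ : ℕ) : ℤ) by omega, hNF (e - d₂) (by omega),
        hNneg ((m : ℤ) - d₂) (by omega), hNF m hm_t] at aE
      rw [show ((e : ℤ) - d₁) = ((e - d₁ : ℕ) : ℤ) by omega, hNF (e - d₁) (by omega),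
        hNneg ((m : ℤ) - d₁) (by omega), hNF m hm_t] at bE
      -- F (e - d₂) = F (e - d₁), hence d₁ = d₂
      have hdd : d₁ = d₂ := by
        have : F c (e - d₂) = F c (e - d₁) := by omega
        have := (F_strictMono c hc).injective this
        omega
      subst hdd
      -- a2 evaluation
      have hNmd : N ((m : ℤ) + 1 - d₁) = (if m + 1 = d₁ then 1 else 0) := by
        rcases Nat.lt_or_ge (m + 1) d₁ with h | h
        · rw [hNneg _ (by omega), if_neg (by omega)]
        · have : m + 1 = d₁ := by omega
          rw [show ((m : ℤ) + 1 - d₁) = (0 : ℤ) by omega, hN0, if_pos this]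
      have hNmD : N ((m : ℤ) + 1 - D) = 0 := hNneg _ (by omega)
      rw [hNmd, hNmD, show ((m : ℤ) + 1) = ((m + 1 : ℕ) : ℤ) by omega,
        hNF (m + 1) (by omega)] at a2
      rcases le_or_gt (e - d₁ + 1) t with hcase2 | hcase2
      · -- III.1.a
        rw [show ((e : ℤ) - d₁ + 1) = ((e - d₁ + 1 : ℕ) : ℤ) by omega,
          hNF (e - d₁ + 1) hcase2] at a2
        have : F c (m + 1) < F c (e - d₁ + 1) := F_strictMono c hc (by omega)
        split at a2 <;> omega
      · -- III.1.b
        rw [show ((e : ℤ) - d₁ + 1) = ((e - d₁ + 1 : ℕ) : ℤ) by omega,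
          hNg (e - d₁ + 1) hcase2 (by omega),
          show e - (e - d₁ + 1) = d₁ - 1 by omega] at a2
        rcases Nat.lt_or_ge 1 d₁ with hd2 | hd2
        · -- d₁ ≥ 2
          have h2F : 2 ≤ F c (d₁ - 1) := by
            have : F c 1 ≤ F c (d₁ - 1) := hFmono (by omega)
            rw [F_one c (by omega)] at this
            omega
          have hprod : r * 2 ≤ r * F c (d₁ - 1) := Nat.mul_le_mul_left r h2F
          have hF1 : F c (m + 1) ≤ F c d₁ := hFmono (by omega)
          have hFsup := F_super c hc d₁ m
          rw [show m + d₁ = e - d₁ by omega] at hFsup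
          -- bE : F(e - d₁) = r + F m ; so F d₁ ≤ r + 1
          split at a2 <;> omega
        · -- d₁ = 1
          have hd1 : d₁ = 1 := by omega
          subst hd1
          rw [show (1 : ℕ) - 1 = 0 from rfl, F_zero, mul_one] at a2
          rw [show e - 1 = m + 1 by omega] at bE
          have hFm1 : F c (m + 1) = F c m + G c (m + 1) := F_succ c hc m
          -- from a2 and bE : F m = ε ≤ 1, so m = 0
          have hm0 : m = 0 := by
            by_contra hm0
            have : F c 1 ≤ F c m := hFmono (by omega)
            rw [F_one c (by omega)] at this
            split at a2 <;> omega
          have hF1 : F c 1 = c := F_one c (by omega)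
          have hFz : F c 0 = 1 := F_zero c
          rw [hm0] at bE a2
          norm_num at bE a2
          exact hne ⟨by omega, by omega⟩
    · -- III.2 : t < e - d₁
      rw [show ((e : ℤ) - d₁) = ((e - d₁ : ℕ) : ℤ) by omega, hNg (e - d₁) hcase (by omega),
        show e - (e - d₁) = d₁ by omega, hNF m hm_t] at bE
      -- d₁ ≤ m
      have hd₁m : d₁ ≤ m := by
        by_contra hcon
        push_neg at hcon
        rw [hNneg ((m : ℤ) - d₁) (by omega)] at bE
        have h1 : r * (F c m + 1) ≤ r * F c d₁ :=
          Nat.mul_le_mul_left r (F_strictMono c hc (show m < d₁ by omega))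
        have h2 : r * (F c m + 1) = r * F c m + r := by ring
        have h3 : 2 * F c m ≤ r * F c m := Nat.mul_le_mul_right _ hr
        have := F_pos c m
        omega
      rw [show ((m : ℤ) - d₁) = ((m - d₁ : ℕ) : ℤ) by omega, hNF (m - d₁) (by omega)] at bE
      -- c = 2 or c ≥ 3
      rcases eq_or_lt_of_le hc with hc2 | hc3
      · -- c = 2 : contradiction from bE alone
        have hF2 : ∀ j : ℕ, F c j = j + 1 := by
          intro j
          rw [F, show c - 1 + j = 1 + j by omega, show c - 1 = 1 by omega,
            Nat.choose_one_right]
          omega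
        rw [hF2, hF2, hF2] at bE
        have hp : r * (d₁ + 1) = r * d₁ + r := by ring
        have h2d : 2 * d₁ ≤ r * d₁ := Nat.mul_le_mul_right _ hr
        omega
      · -- c ≥ 3
        -- evaluate a2 pieces
        rw [show ((e : ℤ) - d₁ + 1) = ((e - d₁ + 1 : ℕ) : ℤ) by omega,
          hNg (e - d₁ + 1) (by omega) (by omega),
          show e - (e - d₁ + 1) = d₁ - 1 by omega,
          show ((m : ℤ) + 1 - d₁) = ((m + 1 - d₁ : ℕ) : ℤ) by omega,
          hNF (m + 1 - d₁) (by omega)] at a2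
        have hδ : N ((m : ℤ) + 1 - D) = (if m + 1 = D then 1 else 0) := by
          rcases Nat.lt_or_ge (m + 1) D with h | h
          · rw [hNneg _ (by omega), if_neg (by omega)]
          · have hmD : m + 1 = D := by omega
            rw [show ((m : ℤ) + 1 - D) = (0 : ℤ) by omega, hN0, if_pos hmD]
        rw [hδ] at a2
        -- difference expansions
        have hFd₁ : F c d₁ = F c (d₁ - 1) + G c d₁ := by
          have := F_succ c hc (d₁ - 1)
          rwa [show d₁ - 1 + 1 = d₁ by omega] at this
        have hp1 : r * F c d₁ = r * F c (d₁ - 1) + r * G c d₁ := by rw [hFd₁]; ring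
        rcases lt_or_eq_of_le hm_t with hmt | hmt
        · -- III.2.b : m < t
          rw [show ((m : ℤ) + 1) = ((m + 1 : ℕ) : ℤ) by omega, hNF (m + 1) (by omega)] at a2
          have hFm1 : F c (m + 1) = F c m + G c (m + 1) := F_succ c hc m
          have hFmd : F c (m + 1 - d₁) = F c (m - d₁) + G c (m + 1 - d₁) := by
            have := F_succ c hc (m - d₁)
            rwa [show m - d₁ + 1 = m + 1 - d₁ by omega] at this
          have hp2 : r * G c 1 ≤ r * G c d₁ := Nat.mul_le_mul_left r (G_mono c hd₁)
          rw [G_one c hc] at hp2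
          have hp3 : r * 2 ≤ r * (c - 1) := Nat.mul_le_mul_left r (by omega)
          have hg : G c (m + 1 - d₁) ≤ G c (m + 1) := G_mono c (by omega)
          split at a2 <;> omega
        · -- III.2.c : m = t
          rw [show ((m : ℤ) + 1) = ((m + 1 : ℕ) : ℤ) by omega,
            hNg (m + 1) (by omega) (by omega), show e - (m + 1) = D - 1 by omega] at a2
          set W : ℕ := F c (m + 1 - d₁) with hW
          have hW3 : 3 ≤ W := by
            have h1 : F c 1 ≤ F c (m + 1 - d₁) := hFmono (by omega)
            rw [F_one c (by omega)] at h1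
            omega
          have hZW : F c (d₁ - 1) + W ≤ F c (D - 1) + 1 := by
            have h1 := F_super c hc d₂ (d₁ - 1)
            rw [show d₁ - 1 + d₂ = D - 1 by omega] at h1
            have h2 : W ≤ F c d₂ := hFmono (by omega)
            omega
          have hmul' := Nat.mul_le_mul_left r hZW
          rw [Nat.mul_add, Nat.mul_add, Nat.mul_one] at hmul'
          have h2W : 2 * W ≤ r * W := Nat.mul_le_mul_right _ hr
          have h4 : r + 2 * W ≤ r * W + 2 := tech4 r W hr hW3
          split at a2 <;> omega

end EZD
open EZD


noncomputable def degSetEquivSym (c j : ℕ) : {d : Fin c →₀ ℕ | d.degree = j} ≃ Sym (Fin c) j where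
  toFun d := ⟨Finsupp.toMultiset d.1, by rw [Finsupp.card_toMultiset]; exact d.2⟩
  invFun m := ⟨Multiset.toFinsupp m.1, by simp only [Set.mem_setOf_eq]; rw [Finsupp.degree_eq_sum]; simp [Finsupp.degree]⟩
  left_inv d := by ext : 1; simp
  right_inv m := by ext : 1; simp

noncomputable instance degSetFintype (c j : ℕ) : Fintype {d : Fin c →₀ ℕ | d.degree = j} :=
  Fintype.ofEquiv _ (degSetEquivSym c j).symm

noncomputable def homogEquiv (k : Type*) [Field k] (c j : ℕ) :
    (homogeneousSubmodule (Fin c) k j) ≃ₗ[k] ({d : Fin c →₀ ℕ | d.degree = j} →₀ k) := by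
  rw [homogeneousSubmodule_eq_finsupp_supported]
  exact AddMonoidAlgebra.supportedEquivFinsupp _

instance homogFD (k : Type*) [Field k] (c j : ℕ) :
    FiniteDimensional k (homogeneousSubmodule (Fin c) k j) :=
  Module.Finite.equiv (homogEquiv k c j).symm

theorem finrank_homog (k : Type*) [Field k] (c j : ℕ) (hc : 1 ≤ c) :
    finrank k (homogeneousSubmodule (Fin c) k j) = Nat.choose (c - 1 + j) (c - 1) := by
  rw [LinearEquiv.finrank_eq (homogEquiv k c j)]
  rw [LinearEquiv.finrank_eq (Finsupp.linearEquivFunOnFinite k k _), Module.finrank_pi]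
  rw [Fintype.card_congr (degSetEquivSym c j), Sym.card_sym_eq_choose, Fintype.card_fin]
  have h1 : c + j - 1 = c - 1 + j := by omega
  rw [h1, ← Nat.choose_symm (show c - 1 ≤ c - 1 + j by omega)]
  congr 1
  omega

section Graded
variable {k : Type*} [Field k] {c : ℕ} {I : Ideal (MvPolynomial (Fin c) k)}

lemma mem_quotComponent {s : MvPolynomial (Fin c) k ⧸ I} {i : ℕ} :
    s ∈ quotComponent I i ↔
      ∃ p : MvPolynomial (Fin c) k, p.IsHomogeneous i ∧ Ideal.Quotient.mk I p = s := by
  simp only [quotComponent, Submodule.mem_map, mem_homogeneousSubmodule, AlgHom.toLinearMap_apply,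
    Ideal.Quotient.mkₐ_eq_mk]

lemma quotComponent_mul {a b : MvPolynomial (Fin c) k ⧸ I} {i j : ℕ}
    (ha : a ∈ quotComponent I i) (hb : b ∈ quotComponent I j) :
    a * b ∈ quotComponent I (i + j) := by
  obtain ⟨p, hp, rfl⟩ := mem_quotComponent.1 ha
  obtain ⟨q, hq, rfl⟩ := mem_quotComponent.1 hb
  exact mem_quotComponent.2 ⟨p * q, hp.mul hq, map_mul _ _ _⟩

lemma hc_mul (q p : MvPolynomial (Fin c) k) {d n : ℕ} (hp : p.IsHomogeneous d) :
    homogeneousComponent n (q * p)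
      = if d ≤ n then homogeneousComponent (n - d) q * p else 0 := by
  conv_lhs => rw [← sum_homogeneousComponent q, Finset.sum_mul, map_sum]
  have key : ∀ i : ℕ, homogeneousComponent n (homogeneousComponent i q * p)
      = if i = n - d ∧ d ≤ n then homogeneousComponent i q * p else 0 := by
    intro i
    have hmem : homogeneousComponent i q * p ∈ homogeneousSubmodule (Fin c) k (i + d) :=
      (mem_homogeneousSubmodule _ _).2 ((homogeneousComponent_isHomogeneous i q).mul hp)
    rw [homogeneousComponent_of_mem hmem]
    by_cases h : n = i + d
    · rw [if_pos h, if_pos ⟨by omega, by omega⟩]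
    · rw [if_neg h, if_neg (by omega)]
  by_cases hd : d ≤ n
  · rw [if_pos hd]
    simp only [key, hd, and_true]
    rw [Finset.sum_ite_eq' (Finset.range (q.totalDegree + 1)) (n - d)
      (fun i => homogeneousComponent i q * p)]
    by_cases hmem : n - d ∈ Finset.range (q.totalDegree + 1)
    · rw [if_pos hmem]
    · rw [if_neg hmem, homogeneousComponent_eq_zero, zero_mul]
      simp only [Finset.mem_range] at hmem
      omega
  · rw [if_neg hd]
    simp only [key]
    simp [hd]
end Graded

section Key
variable {k : Type*} [Field k] {c : ℕ} {I : Ideal (MvPolynomial (Fin c) k)}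

lemma key_kernel (hIhom : ∀ p ∈ I, ∀ j : ℕ, MvPolynomial.homogeneousComponent j p ∈ I)
    {dω dx : ℕ} {ω θ x : MvPolynomial (Fin c) k ⧸ I}
    (hω : ω ∈ quotComponent I dω) (hx : x ∈ quotComponent I dx)
    (hexact : ∀ s, s * θ = 0 → ∃ u, s = u * ω) (hxθ : x * θ = 0) :
    (dω ≤ dx ∧ ∃ u ∈ quotComponent I (dx - dω), x = u * ω) ∨ x = 0 := by
  obtain ⟨p, hp, rfl⟩ := mem_quotComponent.1 hx
  obtain ⟨pw, hpw, rfl⟩ := mem_quotComponent.1 hω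
  obtain ⟨u, hu⟩ := hexact _ hxθ
  obtain ⟨q, rfl⟩ := Ideal.Quotient.mk_surjective u
  have hI : p - q * pw ∈ I := by
    rw [← map_mul] at hu
    exact Ideal.Quotient.eq.mp hu
  have h2 := hIhom _ hI dx
  rw [map_sub, homogeneousComponent_of_mem ((mem_homogeneousSubmodule _ _).2 hp),
    if_pos rfl, hc_mul q pw hpw] at h2
  by_cases hd : dω ≤ dx
  · rw [if_pos hd] at h2
    left
    refine ⟨hd, Ideal.Quotient.mk I (homogeneousComponent (dx - dω) q),
      mem_quotComponent.2 ⟨_, homogeneousComponent_isHomogeneous _ _, rfl⟩, ?_⟩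
    rw [← map_mul]
    exact Ideal.Quotient.eq.mpr h2
  · rw [if_neg hd, sub_zero] at h2
    right
    exact Ideal.Quotient.eq_zero_iff_mem.2 h2
end Key


section FD
variable {k M M' : Type*} [Field k] [AddCommGroup M] [Module k M] [AddCommGroup M'] [Module k M']
lemma fd_map (V : Submodule k M) [FiniteDimensional k V] (f : M →ₗ[k] M') :
    FiniteDimensional k (V.map f) := by
  rw [← Submodule.range_subtype V, ← LinearMap.range_comp]
  exact LinearMap.finiteDimensional_range _
end FD
section T5
variable {k : Type*} [Field k] {c : ℕ} {I : Ideal (MvPolynomial (Fin c) k)}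


instance quotComponentFD (i : ℕ) : FiniteDimensional k (quotComponent I i) :=
  fd_map _ _

noncomputable def mulImage (I : Ideal (MvPolynomial (Fin c) k)) (θ : MvPolynomial (Fin c) k ⧸ I)
    (i : ℕ) : Submodule k (MvPolynomial (Fin c) k ⧸ I) :=
  (quotComponent I i).map (LinearMap.mulRight k θ)

instance mulImageFD (θ : MvPolynomial (Fin c) k ⧸ I) (i : ℕ) :
    FiniteDimensional k (mulImage I θ i) := fd_map _ _

lemma mulImage_le (θ : MvPolynomial (Fin c) k ⧸ I) {d : ℕ} (hθ : θ ∈ quotComponent I d)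
    (i : ℕ) : mulImage I θ i ≤ quotComponent I (i + d) := by
  rintro x ⟨y, hy, rfl⟩
  exact quotComponent_mul hy hθ

lemma rank_split (hIhom : ∀ p ∈ I, ∀ j : ℕ, MvPolynomial.homogeneousComponent j p ∈ I)
    {d₂ : ℕ} {θ₁ θ₂ : MvPolynomial (Fin c) k ⧸ I} (hθ₂ : θ₂ ∈ quotComponent I d₂)
    (hexact : ∀ s, s * θ₁ = 0 → ∃ u, s = u * θ₂) (hmul0 : θ₂ * θ₁ = 0) (i : ℕ) :
    finrank k (quotComponent I i) =
      finrank k (mulImage I θ₁ i) +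
        (if d₂ ≤ i then finrank k (mulImage I θ₂ (i - d₂)) else 0) := by
  have hρ := LinearMap.finrank_range_add_finrank_ker
    ((LinearMap.mulRight k θ₁).comp (quotComponent I i).subtype)
  rw [LinearMap.range_comp, Submodule.range_subtype] at hρ
  rw [← hρ]
  congr 1
  -- kernel part
  have hker : Submodule.map (quotComponent I i).subtype
      (LinearMap.ker ((LinearMap.mulRight k θ₁).comp (quotComponent I i).subtype))
      = (if d₂ ≤ i then mulImage I θ₂ (i - d₂) else ⊥) := by
    apply le_antisymm
    · rintro x ⟨⟨y, hy⟩, hky, rfl⟩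
      have hky' : y * θ₁ = 0 := hky
      rcases key_kernel hIhom hθ₂ hy hexact hky' with ⟨hd, u, hu, hx⟩ | h0
      · rw [if_pos hd]
        exact ⟨u, hu, hx.symm⟩
      · subst h0
        split <;> exact Submodule.zero_mem _
    · by_cases hd : d₂ ≤ i
      · rw [if_pos hd]
        rintro x ⟨u, hu, rfl⟩
        refine ⟨⟨u * θ₂, ?_⟩, ?_, rfl⟩
        · have := quotComponent_mul hu hθ₂
          rwa [Nat.sub_add_cancel hd] at this
        · show (u * θ₂) * θ₁ = 0
          rw [mul_assoc, hmul0, mul_zero]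
      · rw [if_neg hd]
        exact bot_le
  have := LinearEquiv.finrank_eq
    (Submodule.equivMapOfInjective (quotComponent I i).subtype
      (Submodule.injective_subtype _)
      (LinearMap.ker ((LinearMap.mulRight k θ₁).comp (quotComponent I i).subtype)))
  rw [this, hker]
  by_cases hd : d₂ ≤ i
  · rw [if_pos hd, if_pos hd]
  · rw [if_neg hd, if_neg hd, finrank_bot]

lemma mulImage_bot {e : ℕ} (htop : ∀ i : ℕ, e < i → quotComponent I i = ⊥)
    {θ : MvPolynomial (Fin c) k ⧸ I} {d : ℕ} (hθ : θ ∈ quotComponent I d)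
    {i : ℕ} (hi : e < i + d) : mulImage I θ i = ⊥ := by
  rw [← le_bot_iff, ← htop (i + d) hi]
  exact mulImage_le θ hθ i
end T5


section Assemble
variable {k : Type*} [Field k] {c : ℕ} {I : Ideal (MvPolynomial (Fin c) k)}

lemma one_ne_mul_comp (hIhom : ∀ p ∈ I, ∀ j : ℕ, homogeneousComponent j p ∈ I)
    (hI0 : ∀ p ∈ I, p.IsHomogeneous 0 → p = 0)
    {d : ℕ} (hd : 1 ≤ d) {θ u : MvPolynomial (Fin c) k ⧸ I}
    (hθ : θ ∈ quotComponent I d) : (1 : MvPolynomial (Fin c) k ⧸ I) ≠ u * θ := by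
  intro h
  obtain ⟨p₂, hp₂, rfl⟩ := mem_quotComponent.1 hθ
  obtain ⟨q, rfl⟩ := Ideal.Quotient.mk_surjective u
  rw [← map_one (Ideal.Quotient.mk I), ← map_mul] at h
  have hI : (1 : MvPolynomial (Fin c) k) - q * p₂ ∈ I := Ideal.Quotient.eq.mp h
  have h2 := hIhom _ hI 0
  rw [map_sub, hc_mul q p₂ hp₂, if_neg (by omega), sub_zero,
    homogeneousComponent_of_mem ((mem_homogeneousSubmodule _ _).2
      (isHomogeneous_one (Fin c) k)), if_pos rfl] at h2
  exact one_ne_zero (hI0 _ h2 (isHomogeneous_one (Fin c) k))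

lemma inj_of_dim (hc : 1 ≤ c) {z : ℕ}
    (hdim : finrank k (quotComponent I z) = EZD.F c z) :
    ∀ p : MvPolynomial (Fin c) k, p.IsHomogeneous z → p ∈ I → p = 0 := by
  intro p hp hpI
  set φ := (Ideal.Quotient.mkₐ k I).toLinearMap ∘ₗ (homogeneousSubmodule (Fin c) k z).subtype
    with hφ
  have hrange : LinearMap.range φ = quotComponent I z := by
    rw [hφ, LinearMap.range_comp, Submodule.range_subtype]
    rfl
  have hrn := LinearMap.finrank_range_add_finrank_ker φ
  have hF : EZD.F c z = Nat.choose (c - 1 + z) (c - 1) := rfl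
  rw [hrange, hdim, finrank_homog k c z hc] at hrn
  have hker : LinearMap.ker φ = ⊥ := Submodule.finrank_eq_zero.mp (by omega)
  have hmem : (⟨p, (mem_homogeneousSubmodule _ _).2 hp⟩ :
      homogeneousSubmodule (Fin c) k z) ∈ LinearMap.ker φ := by
    show (Ideal.Quotient.mkₐ k I) p = 0
    rw [Ideal.Quotient.mkₐ_eq_mk]
    exact Ideal.Quotient.eq_zero_iff_mem.2 hpI
  rw [hker, Submodule.mem_bot] at hmem
  exact Subtype.ext_iff.1 hmem

noncomputable def NN (I : Ideal (MvPolynomial (Fin c) k)) (z : ℤ) : ℕ :=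
  if 0 ≤ z then finrank k (quotComponent I z.toNat) else 0

noncomputable def AB (I : Ideal (MvPolynomial (Fin c) k)) (θ : MvPolynomial (Fin c) k ⧸ I)
    (z : ℤ) : ℕ :=
  if 0 ≤ z then finrank k (mulImage I θ z.toNat) else 0

lemma L1_general (hIhom : ∀ p ∈ I, ∀ j : ℕ, homogeneousComponent j p ∈ I)
    {d₂ : ℕ} {θ₁ θ₂ : MvPolynomial (Fin c) k ⧸ I} (hθ₂ : θ₂ ∈ quotComponent I d₂)
    (hexact : ∀ s, s * θ₁ = 0 → ∃ u, s = u * θ₂) (hmul0 : θ₂ * θ₁ = 0) :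
    ∀ z : ℤ, NN I z = AB I θ₁ z + AB I θ₂ (z - d₂) := by
  intro z
  unfold NN AB
  by_cases hz : 0 ≤ z
  · rw [if_pos hz, if_pos hz, rank_split hIhom hθ₂ hexact hmul0 z.toNat]
    congr 1
    by_cases h2 : (d₂ : ℤ) ≤ z
    · rw [if_pos (by omega : d₂ ≤ z.toNat), if_pos (by omega : (0:ℤ) ≤ z - d₂),
        show (z - d₂).toNat = z.toNat - d₂ by omega]
    · rw [if_neg (by omega : ¬ d₂ ≤ z.toNat), if_neg (by omega : ¬ (0:ℤ) ≤ z - d₂)]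
  · rw [if_neg hz, if_neg hz, if_neg (by omega : ¬ (0:ℤ) ≤ z - d₂)]

lemma AB_high {e : ℕ} (htop : ∀ i : ℕ, e < i → quotComponent I i = ⊥)
    {θ : MvPolynomial (Fin c) k ⧸ I} {d : ℕ} (hθ : θ ∈ quotComponent I d)
    {z : ℤ} (h : (e : ℤ) - d < z) : AB I θ z = 0 := by
  unfold AB
  by_cases hz : 0 ≤ z
  · rw [if_pos hz, mulImage_bot htop hθ (show e < z.toNat + d by omega), finrank_bot]
  · rw [if_neg hz]

lemma AB_neg {θ : MvPolynomial (Fin c) k ⧸ I} {z : ℤ} (h : z < 0) : AB I θ z = 0 := by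
  unfold AB
  rw [if_neg (by omega)]

theorem main_aux (hIhom : ∀ p ∈ I, ∀ j : ℕ, homogeneousComponent j p ∈ I)
    (hI0 : ∀ p ∈ I, p.IsHomogeneous 0 → p = 0)
    (e r : ℕ)
    (htop : ∀ i : ℕ, e < i → quotComponent I i = ⊥)
    (hr : r = finrank k (quotComponent I e))
    (hcompressed : ∀ i : ℕ, i ≤ e →
      finrank k (quotComponent I i) =
        min (Nat.choose (c - 1 + i) (c - 1)) (r * Nat.choose (c - 1 + (e - i)) (c - 1)))
    (hc : 2 ≤ c) (he : 2 ≤ e) (hr2 : 2 ≤ r) (hne : ¬(e = 2 ∧ r = c - 1))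
    (d₁ d₂ : ℕ) (hd₁ : 1 ≤ d₁) (hdd : d₁ ≤ d₂)
    (θ₁ θ₂ : MvPolynomial (Fin c) k ⧸ I)
    (hθ₁ : θ₁ ∈ quotComponent I d₁) (hθ₂ : θ₂ ∈ quotComponent I d₂)
    (hp1 : ∀ s, s * θ₁ = 0 ↔ ∃ u, s = u * θ₂)
    (hp2 : ∀ s, s * θ₂ = 0 ↔ ∃ u, s = u * θ₁) : False := by
  have hd₂ : 1 ≤ d₂ := le_trans hd₁ hdd
  have hmul21 : θ₂ * θ₁ = 0 := (hp1 θ₂).mpr ⟨1, (one_mul _).symm⟩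
  have hmul12 : θ₁ * θ₂ = 0 := (hp2 θ₁).mpr ⟨1, (one_mul _).symm⟩
  have hθ₁ne : θ₁ ≠ 0 := by
    intro h0
    obtain ⟨u, hu⟩ := (hp1 1).mp (by rw [h0, mul_zero])
    exact one_ne_mul_comp hIhom hI0 hd₂ hθ₂ hu
  -- the F identity
  have hFid : ∀ i : ℕ, EZD.F c i = Nat.choose (c - 1 + i) (c - 1) := fun _ => rfl
  refine EZD.arith_contra c e r d₁ d₂ hc he hr2 hne hd₁ hdd (NN I) (AB I θ₁) (AB I θ₂)
    ?_ ?_ ?_ ?_ ?_ ?_ ?_ ?_ ?_ ?_ ?_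
  · -- hNval
    intro z hz0 hze
    unfold NN
    rw [if_pos hz0, hcompressed z.toNat (by omega), hFid, hFid]
  · -- hNneg
    intro z hz
    unfold NN
    rw [if_neg (by omega)]
  · -- hNhigh
    intro z hz
    unfold NN
    rw [if_pos (by omega), htop z.toNat (by omega), finrank_bot]
  · -- hNer
    unfold NN
    rw [if_pos (by positivity), Int.toNat_natCast, hr]
  · -- L1
    exact L1_general hIhom hθ₂ (fun s hs => (hp1 s).mp hs) hmul21
  · -- L2
    exact L1_general hIhom hθ₁ (fun s hs => (hp2 s).mp hs) hmul12
  · -- hA0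
    intro z hz
    exact AB_high htop hθ₁ hz
  · -- hB0
    intro z hz
    exact AB_high htop hθ₂ hz
  · -- hAneg
    intro z hz
    exact AB_neg hz
  · -- hBneg
    intro z hz
    exact AB_neg hz
  · -- hInj
    intro z hze hFz
    by_cases hzD : (0 : ℤ) ≤ (z : ℤ) - (d₁ + d₂ : ℕ)
    · unfold AB
      rw [if_pos hzD]
      have hbot : mulImage I θ₂ ((z : ℤ) - (d₁ + d₂ : ℕ)).toNat = ⊥ := by
        rw [Submodule.eq_bot_iff]
        rintro x ⟨u, hu, rfl⟩
        obtain ⟨p, hp, rfl⟩ := mem_quotComponent.1 hu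
        obtain ⟨p₂, hp₂, rfl⟩ := mem_quotComponent.1 hθ₂
        obtain ⟨p₁, hp₁, hmkp₁⟩ := mem_quotComponent.1 hθ₁
        have hdim : finrank k (quotComponent I z) = EZD.F c z := by
          rw [hcompressed z hze, hFid]
          exact min_eq_left (by rw [hFid, hFid] at hFz; exact hFz)
        have hmem : p * p₂ * p₁ ∈ I := by
          rw [← Ideal.Quotient.eq_zero_iff_mem, map_mul, map_mul, hmkp₁,
            mul_assoc, hmul21, mul_zero]
        have hhom : (p * p₂ * p₁).IsHomogeneous z := by
          have h1 := (hp.mul hp₂).mul hp₁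
          rwa [show ((z : ℤ) - (d₁ + d₂ : ℕ)).toNat + d₂ + d₁ = z by omega] at h1
        have hzero := inj_of_dim (by omega) hdim _ hhom hmem
        rcases mul_eq_zero.mp hzero with h | h
        · show (LinearMap.mulRight k (Ideal.Quotient.mk I p₂)) (Ideal.Quotient.mk I p) = 0
          rw [LinearMap.mulRight_apply, ← map_mul, h, map_zero]
        · exfalso
          apply hθ₁ne
          rw [← hmkp₁, h, map_zero]
      rw [hbot, finrank_bot]
    · exact AB_neg (by omega)

end Assemble

/-- **Proposition (level case).** A compressed level algebra `S = P/I` of socle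
degree `e`, type `r`, and codimension `c`, with `c, e, r ≥ 2` and `(e, r) ≠ (2, c−1)`,
has no homogeneous exact zero divisors. -/
theorem stmt_10 {k : Type*} [Field k] (c : ℕ)
    (I : Ideal (MvPolynomial (Fin c) k))
    -- `I` is homogeneous
    (hIhom : ∀ p ∈ I, ∀ j : ℕ, MvPolynomial.homogeneousComponent j p ∈ I)
    -- `[I]₀ = 0` and `[I]₁ = 0`
    (hI0 : ∀ p ∈ I, MvPolynomial.IsHomogeneous p 0 → p = 0)
    (hI1 : ∀ p ∈ I, MvPolynomial.IsHomogeneous p 1 → p = 0)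
    (e r : ℕ)
    -- `S` is a level algebra of socle degree `e` and type `r`:
    (hse : quotComponent I e ≠ ⊥)
    (htop : ∀ i : ℕ, e < i → quotComponent I i = ⊥)
    (hsocle : ∀ s : MvPolynomial (Fin c) k ⧸ I,
      (∀ q ∈ Ideal.span (Set.range (MvPolynomial.X : Fin c → MvPolynomial (Fin c) k)),
        s * Ideal.Quotient.mk I q = 0) ↔ s ∈ quotComponent I e)
    (hr : r = Module.finrank k (quotComponent I e))
    -- `S` is compressed:
    (hcompressed : ∀ i : ℕ, i ≤ e →
      Module.finrank k (quotComponent I i) =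
        min (Nat.choose (c - 1 + i) (c - 1)) (r * Nat.choose (c - 1 + (e - i)) (c - 1)))
    -- the numerical hypotheses of case (2)
    (hc : 2 ≤ c) (he : 2 ≤ e) (hr2 : 2 ≤ r) (hne : ¬(e = 2 ∧ r = c - 1)) :
    ¬ ∃ (d₁ d₂ : ℕ) (θ₁ θ₂ : MvPolynomial (Fin c) k ⧸ I),
        1 ≤ d₁ ∧ 1 ≤ d₂ ∧ θ₁ ∈ quotComponent I d₁ ∧ θ₂ ∈ quotComponent I d₂ ∧
        IsExactZeroDivisorPair θ₁ θ₂ := by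
  rintro ⟨d₁, d₂, θ₁, θ₂, hd₁, hd₂, hθ₁, hθ₂, hpair⟩
  rcases le_total d₁ d₂ with h | h
  · exact main_aux hIhom hI0 e r htop hr hcompressed hc he hr2 hne d₁ d₂ hd₁ h θ₁ θ₂
      hθ₁ hθ₂ hpair.1 hpair.2
  · exact main_aux hIhom hI0 e r htop hr hcompressed hc he hr2 hne d₂ d₁ hd₂ h θ₂ θ₁
      hθ₂ hθ₁ hpair.2 hpair.1
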